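/- The constant c₀ := (1/(8π²)) ∬_{B₁(0)×B₁(0)} log|z−z′| dz dz′ equals −1/32; equivalently, ∬_{B₁(0)×B₁(0)} log|z−z′| dz dz′ = −π²/4, where the double integral is over pairs (z,z′) of points of the closed unit disc in ℝ² with respect to Lebesgue measure, and |·| is the Euclidean norm. -/

import Mathlib

open MeasureTheory Real

open Set intervalIntegral Metric

lemma meanValue {f : ℂ → ℂ} (hf : DiffContOnCl ℂ f (ball (0:ℂ) 1)) :
    (∫ θ in (0:ℝ)..2*π, f (Complex.exp (θ * Complex.I))) = (2*π : ℝ) • f 0 := by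
  have h := hf.circleIntegral_sub_inv_smul (w := 0) (by simp [Real.pi_pos] : (0:ℂ) ∈ ball 0 1)
  rw [circleIntegral] at h
  simp only [deriv_circleMap, sub_zero] at h
  have h2 : ∀ θ : ℝ, (circleMap 0 1 θ * Complex.I) • ((circleMap 0 1 θ)⁻¹ • f (circleMap 0 1 θ))
      = Complex.I * f (circleMap 0 1 θ) := by
    intro θ
    have hne : circleMap 0 1 θ ≠ 0 := circleMap_ne_center one_ne_zero
    field_simp [smul_eq_mul]
    rw [smul_eq_mul, smul_eq_mul, one_div, mul_comm (circleMap 0 1 θ) Complex.I, mul_assoc,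
      ← mul_assoc (circleMap 0 1 θ), mul_inv_cancel₀ hne, one_mul]
  simp only [h2] at h
  rw [intervalIntegral.integral_const_mul] at h
  have hI : (Complex.I : ℂ) ≠ 0 := Complex.I_ne_zero
  have : ∀ θ : ℝ, circleMap 0 1 θ = Complex.exp (θ * Complex.I) := by
    intro θ; simp [circleMap]
  simp only [this] at h
  have h3 : Complex.I * (∫ θ in (0:ℝ)..2*π, f (Complex.exp (θ * Complex.I)))
      = Complex.I * ((2*π : ℝ) • f 0) := by
    rw [h, smul_eq_mul, Complex.real_smul]; push_cast; ring
  exact mul_left_cancel₀ hI h3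

lemma logAbsInt {a : ℂ} (ha : ‖a‖ < 1) :
    (∫ θ in (0:ℝ)..2*π, Real.log ‖1 - a * Complex.exp (θ * Complex.I)‖) = 0 := by
  set f : ℂ → ℂ := fun w => Complex.log (1 - a * w) with hfdef
  have hsp : ∀ w : ℂ, ‖w‖ ≤ 1 → 1 - a * w ∈ Complex.slitPlane := by
    intro w hw
    have : ‖-(a*w)‖ < 1 := by
      rw [norm_neg, norm_mul]
      calc ‖a‖ * ‖w‖ ≤ ‖a‖ * 1 := by
            exact mul_le_mul_of_nonneg_left hw (norm_nonneg _)
        _ < 1 := by simpa using ha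
    simpa [sub_eq_add_neg] using Complex.mem_slitPlane_of_norm_lt_one this
  have hdiff : DiffContOnCl ℂ f (Metric.ball (0:ℂ) 1) := by
    apply DifferentiableOn.diffContOnCl
    rw [closure_ball (0:ℂ) one_ne_zero]
    intro w hw
    have hw1 : ‖w‖ ≤ 1 := by simpa using hw
    exact (((differentiableAt_const (1:ℂ)).sub
      ((differentiableAt_const a).mul (differentiableAt_id))).clog
        (hsp w hw1)).differentiableWithinAt
  have hmv := meanValue hdiff
  have h0 : f 0 = 0 := by simp [hfdef]
  rw [h0, smul_zero] at hmv
  have hre : ∀ θ : ℝ, Real.log ‖1 - a * Complex.exp (θ * Complex.I)‖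
      = (f (Complex.exp (θ * Complex.I))).re := by
    intro θ
    rw [hfdef]
    simp only [Complex.log_re]
  simp only [hre]
  have hcont : Continuous fun θ : ℝ => f (Complex.exp (θ * Complex.I)) := by
    rw [continuous_iff_continuousAt]
    intro θ
    refine ContinuousAt.clog ?_ ?_
    · fun_prop
    · exact hsp _ (by rw [Complex.norm_exp_ofReal_mul_I])
  have hint : IntervalIntegrable (fun θ : ℝ => f (Complex.exp (θ * Complex.I)))
      volume 0 (2*π) := hcont.intervalIntegrable _ _
  have := Complex.reCLM.intervalIntegral_comp_comm hint
  simp only [Complex.reCLM_apply] at this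
  rw [this, hmv, Complex.zero_re]

lemma oneSubNe {c : ℂ} (hc : ‖c‖ < 1) {w : ℂ} (hw : ‖w‖ = 1) : ‖1 - c * w‖ ≠ 0 := by
  intro h
  rw [norm_eq_zero, sub_eq_zero] at h
  have : (1:ℝ) = ‖c‖ := by
    calc (1:ℝ) = ‖(1:ℂ)‖ := by simp
    _ = ‖c * w‖ := by rw [h]
    _ = ‖c‖ := by rw [norm_mul, hw, mul_one]
  linarith

lemma normExpI (θ : ℝ) : ‖Complex.exp (θ * Complex.I)‖ = 1 := by
  rw [Complex.norm_exp_ofReal_mul_I]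

lemma contLogAbs {c : ℂ} (hc : ‖c‖ < 1) :
    Continuous fun θ : ℝ => Real.log ‖1 - c * Complex.exp (θ * Complex.I)‖ := by
  rw [continuous_iff_continuousAt]
  intro θ
  apply ContinuousAt.log (by fun_prop)
  exact oneSubNe hc (normExpI θ)

lemma periodicLogAbs (c : ℂ) :
    Function.Periodic (fun θ : ℝ => Real.log ‖1 - c * Complex.exp (θ * Complex.I)‖) (2*π) := by
  intro θ
  have : Complex.exp (↑(θ + 2*π) * Complex.I) = Complex.exp (θ * Complex.I) := by
    push_cast
    rw [add_mul, Complex.exp_add]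
    simp [Complex.exp_two_pi_mul_I]
  simp only [this]

lemma circleLog {z : ℂ} {r : ℝ} (h0 : 0 ≤ r) (hne : r ≠ ‖z‖) :
    (∫ θ in (0:ℝ)..2*π, Real.log ‖z - r * Complex.exp (θ * Complex.I)‖)
      = 2*π*Real.log (max ‖z‖ r) := by
  rcases lt_or_gt_of_ne hne with hlt | hgt
  · -- r < ‖z‖
    have hz : z ≠ 0 := by
      intro h; rw [h] at hlt; simp at hlt; linarith
    set c : ℂ := (r:ℂ) / z with hcdef
    have hc : ‖c‖ < 1 := by
      rw [hcdef, norm_div, Complex.norm_real, Real.norm_of_nonneg h0, div_lt_one]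
      · exact hlt
      · exact norm_pos_iff.mpr hz
    have hpt : ∀ θ : ℝ, Real.log ‖z - r * Complex.exp (θ * Complex.I)‖
        = Real.log ‖z‖ + Real.log ‖1 - c * Complex.exp (θ * Complex.I)‖ := by
      intro θ
      have key : z - r * Complex.exp (θ * Complex.I)
          = z * (1 - c * Complex.exp (θ * Complex.I)) := by
        rw [hcdef]; field_simp
      rw [key, norm_mul, Real.log_mul (norm_ne_zero_iff.mpr hz) (oneSubNe hc (normExpI θ))]
    simp only [hpt]
    rw [intervalIntegral.integral_add (intervalIntegrable_const)
      ((contLogAbs hc).intervalIntegrable _ _), logAbsInt hc, add_zero,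
      intervalIntegral.integral_const, max_eq_left hlt.le]
    rw [smul_eq_mul]; ring
  · -- ‖z‖ < r
    have hr : 0 < r := lt_of_le_of_lt (norm_nonneg z) hgt
    set c : ℂ := z / (r:ℂ) with hcdef
    have hc : ‖c‖ < 1 := by
      rw [hcdef, norm_div, Complex.norm_real, Real.norm_of_nonneg h0, div_lt_one hr]
      exact hgt
    set g : ℝ → ℝ := fun θ => Real.log ‖1 - c * Complex.exp (θ * Complex.I)‖ with hgdef
    have hrC : (r:ℂ) ≠ 0 := Complex.ofReal_ne_zero.mpr (ne_of_gt hr)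
    have hpt : ∀ θ : ℝ, Real.log ‖z - r * Complex.exp (θ * Complex.I)‖
        = Real.log r + g (-θ) := by
      intro θ
      show Real.log ‖z - r * Complex.exp (θ * Complex.I)‖
        = Real.log r + Real.log ‖1 - c * Complex.exp ((↑(-θ):ℂ) * Complex.I)‖
      push_cast
      have hexpne : Complex.exp ((θ:ℂ) * Complex.I) ≠ 0 := Complex.exp_ne_zero _
      have key : z - r * Complex.exp (θ * Complex.I)
          = (- (r * Complex.exp (θ * Complex.I))) * (1 - c * Complex.exp (-(θ:ℂ) * Complex.I)) := by
        rw [hcdef]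
        have h9 : Complex.exp (-(θ:ℂ) * Complex.I) = (Complex.exp ((θ:ℂ) * Complex.I))⁻¹ := by
          rw [← Complex.exp_neg]; ring_nf
        rw [h9]
        field_simp
        ring
      rw [key, norm_mul, norm_neg, norm_mul, normExpI, mul_one, Complex.norm_real,
        Real.norm_of_nonneg h0]
      have h8 : ‖1 - c * Complex.exp (-(θ:ℂ) * Complex.I)‖ ≠ 0 := by
        have := oneSubNe hc (normExpI (-θ))
        simpa using this
      rw [Real.log_mul (ne_of_gt hr) h8]
    have hcongr : (∫ θ in (0:ℝ)..2*π, Real.log ‖z - r * Complex.exp (θ * Complex.I)‖)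
        = ∫ θ in (0:ℝ)..2*π, (Real.log r + g (-θ)) := by
      apply intervalIntegral.integral_congr
      intro θ _
      exact hpt θ
    have hgcont : Continuous g := contLogAbs hc
    have hshift : (∫ θ in (0:ℝ)..2*π, g (-θ)) = 0 := by
      rw [intervalIntegral.integral_comp_neg (f := g)]
      have h2 := (periodicLogAbs c).intervalIntegral_add_eq (-(2*π)) 0
      rw [zero_add] at h2
      have h3 : -(2*π) + 2*π = 0 := by ring
      rw [h3] at h2
      rw [neg_zero, ← hgdef] at *
      rw [h2]
      exact logAbsInt hc
    have hi : IntervalIntegrable (fun θ : ℝ => g (-θ)) volume 0 (2*π) :=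
      Continuous.intervalIntegrable (by fun_prop) _ _
    rw [hcongr, intervalIntegral.integral_add intervalIntegrable_const hi, hshift, add_zero,
      intervalIntegral.integral_const, max_eq_right hgt.le]
    rw [smul_eq_mul]; ring

lemma polar_symm_eq (p : ℝ × ℝ) :
    Complex.polarCoord.symm p = (p.1 : ℂ) * Complex.exp ((p.2 : ℂ) * Complex.I) := by
  rw [Complex.polarCoord_symm_apply, Complex.exp_mul_I]
  simp [Complex.ofReal_cos, Complex.ofReal_sin]

lemma polar_ball (g : ℂ → ℝ)
    (hg : IntegrableOn (fun p : ℝ × ℝ => p.1 * g ((p.1 : ℂ) * Complex.exp ((p.2:ℂ) * Complex.I)))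
      (Ioc (0:ℝ) 1 ×ˢ Ioo (-π) π)) :
    (∫ w in Metric.closedBall (0:ℂ) 1, g w)
      = ∫ r in Ioc (0:ℝ) 1, ∫ θ in Ioo (-π) π, r * g ((r:ℂ) * Complex.exp ((θ:ℂ) * Complex.I)) := by
  rw [← MeasureTheory.integral_indicator (measurableSet_closedBall)]
  rw [← Complex.integral_comp_polarCoord_symm
    (Set.indicator (Metric.closedBall (0:ℂ) 1) g)]
  rw [polarCoord_target]
  have hsub : Ioc (0:ℝ) 1 ×ˢ Ioo (-π) π ⊆ Ioi (0:ℝ) ×ˢ Ioo (-π) π := by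
    apply Set.prod_mono_left
    exact Ioc_subset_Ioi_self
  have hzero : ∀ p ∈ (Ioi (0:ℝ) ×ˢ Ioo (-π) π) \ (Ioc (0:ℝ) 1 ×ˢ Ioo (-π) π),
      p.1 • (Set.indicator (Metric.closedBall (0:ℂ) 1) g) (Complex.polarCoord.symm p) = 0 := by
    rintro ⟨r, θ⟩ ⟨⟨hr, hθ⟩, hnot⟩
    simp only [Set.mem_prod] at hnot
    have hr1 : 1 < r := by
      by_contra hle
      exact hnot ⟨⟨hr, le_of_not_gt hle⟩, hθ⟩
    have : Complex.polarCoord.symm (r, θ) ∉ Metric.closedBall (0:ℂ) 1 := by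
      simp only [Metric.mem_closedBall, dist_zero_right,
        Complex.norm_polarCoord_symm]
      simp only [not_le]
      calc (1:ℝ) < r := hr1
      _ = |r| := (abs_of_pos (lt_trans one_pos hr1)).symm
    rw [Set.indicator_of_notMem this, smul_zero]
  rw [setIntegral_eq_of_subset_of_forall_diff_eq_zero
    (measurableSet_Ioi.prod measurableSet_Ioo) hsub hzero]
  rw [setIntegral_congr_fun (measurableSet_Ioc.prod measurableSet_Ioo)
    (g := fun p : ℝ × ℝ => p.1 * g ((p.1 : ℂ) * Complex.exp ((p.2:ℂ) * Complex.I)))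
    (by
      rintro ⟨r, θ⟩ ⟨hr, hθ⟩
      have hmem : Complex.polarCoord.symm (r, θ) ∈ Metric.closedBall (0:ℂ) 1 := by
        simp only [Metric.mem_closedBall, dist_zero_right,
          Complex.norm_polarCoord_symm]
        rw [abs_of_pos hr.1]
        exact hr.2
      rw [polar_symm_eq] at hmem
      simp only [smul_eq_mul, polar_symm_eq, Set.indicator_of_mem hmem])]
  exact setIntegral_prod _ hg

lemma abs_log_le {x : ℝ} (hx : 0 ≤ x) : |Real.log x| ≤ 2 * x ^ (-(1/2:ℝ)) + x := by
  rcases eq_or_lt_of_le hx with h0 | h0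
  · rw [← h0]
    simp [Real.zero_rpow (by norm_num : -(1/2:ℝ) ≠ 0)]
  rcases le_or_gt x 1 with h1 | h1
  · have hlog : Real.log x ≤ 0 := Real.log_nonpos hx h1
    rw [abs_of_nonpos hlog]
    have key : -Real.log x = 2 * Real.log (x ^ (-(1/2:ℝ))) := by
      rw [Real.log_rpow h0]; ring
    rw [key]
    have h2 : Real.log (x ^ (-(1/2:ℝ))) ≤ x ^ (-(1/2:ℝ)) - 1 :=
      Real.log_le_sub_one_of_pos (Real.rpow_pos_of_pos h0 _)
    nlinarith
  · rw [abs_of_nonneg (Real.log_nonneg h1.le)]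
    have h2 : Real.log x ≤ x - 1 := Real.log_le_sub_one_of_pos h0
    have h3 : (0:ℝ) ≤ 2 * x ^ (-(1/2:ℝ)) := by positivity
    linarith

lemma integ_abs_rpow {m : ℝ} (h0 : 0 ≤ m) (h1 : m ≤ 1) :
    IntegrableOn (fun r : ℝ => |r - m| ^ (-(1/2:ℝ))) (Ioc 0 1) := by
  have hsplit : Ioc (0:ℝ) 1 = Ioc 0 m ∪ Ioc m 1 := (Ioc_union_Ioc_eq_Ioc h0 h1).symm
  rw [hsplit]
  apply IntegrableOn.union
  · have hbase : IntervalIntegrable (fun x : ℝ => x ^ (-(1/2:ℝ))) volume 0 m :=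
      intervalIntegral.intervalIntegrable_rpow' (by norm_num)
    have hcomp := (hbase.comp_sub_left m).symm
    rw [sub_self, sub_zero] at hcomp
    have hIoc : IntegrableOn (fun x : ℝ => (m - x) ^ (-(1/2:ℝ))) (Ioc 0 m) :=
      (intervalIntegrable_iff_integrableOn_Ioc_of_le h0).mp hcomp
    apply hIoc.congr_fun ?_ measurableSet_Ioc
    intro x hx
    have : |x - m| = m - x := by
      rw [abs_sub_comm, abs_of_nonneg (by linarith [hx.2])]
    simp only [this]
  · have hbase : IntervalIntegrable (fun x : ℝ => x ^ (-(1/2:ℝ))) volume 0 (1-m) :=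
      intervalIntegral.intervalIntegrable_rpow' (by norm_num)
    have hcomp := hbase.comp_sub_right m
    rw [zero_add, sub_add_cancel] at hcomp
    have hIoc : IntegrableOn (fun x : ℝ => (x - m) ^ (-(1/2:ℝ))) (Ioc m 1) :=
      (intervalIntegrable_iff_integrableOn_Ioc_of_le h1).mp hcomp
    apply hIoc.congr_fun ?_ measurableSet_Ioc
    intro x hx
    simp only [abs_of_nonneg (by linarith [hx.1.le] : (0:ℝ) ≤ x - m)]

lemma norm_r_exp (r θ : ℝ) (hr : 0 ≤ r) : ‖(r:ℂ) * Complex.exp ((θ:ℂ) * Complex.I)‖ = r := by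
  rw [norm_mul, normExpI, mul_one, Complex.norm_real, Real.norm_of_nonneg hr]

lemma log_int {z : ℂ} (hz : ‖z‖ ≤ 1) :
    IntegrableOn
      (fun p : ℝ × ℝ => p.1 * Real.log ‖z - (p.1:ℂ) * Complex.exp ((p.2:ℂ) * Complex.I)‖)
      (Ioc (0:ℝ) 1 ×ˢ Ioo (-π) π) := by
  set m := ‖z‖ with hm
  set F := fun p : ℝ × ℝ => p.1 * Real.log ‖z - (p.1:ℂ) * Complex.exp ((p.2:ℂ) * Complex.I)‖
    with hFdef
  have hmeas : Measurable F := by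
    apply Measurable.mul measurable_fst
    apply Real.measurable_log.comp
    apply Continuous.measurable
    fun_prop
  have lower : ∀ r θ : ℝ, 0 ≤ r → |r - m| ≤ ‖z - (r:ℂ) * Complex.exp ((θ:ℂ) * Complex.I)‖ := by
    intro r θ hr
    have h := abs_norm_sub_norm_le z ((r:ℂ) * Complex.exp ((θ:ℂ) * Complex.I))
    rw [norm_r_exp r θ hr] at h
    rwa [abs_sub_comm]
  have upper : ∀ r θ : ℝ, 0 ≤ r → r ≤ 1 →
      ‖z - (r:ℂ) * Complex.exp ((θ:ℂ) * Complex.I)‖ ≤ 2 := by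
    intro r θ hr hr1
    calc ‖z - (r:ℂ) * Complex.exp ((θ:ℂ) * Complex.I)‖
        ≤ ‖z‖ + ‖(r:ℂ) * Complex.exp ((θ:ℂ) * Complex.I)‖ := norm_sub_le _ _
      _ ≤ 1 + 1 := by rw [norm_r_exp r θ hr]; exact add_le_add hz hr1
      _ = 2 := by norm_num
  have hae : ∀ᵐ r ∂(volume.restrict (Ioc (0:ℝ) 1)), r ∈ Ioc (0:ℝ) 1 ∧ r ≠ m := by
    have h1 : ∀ᵐ r : ℝ, r ≠ m := by
      rw [ae_iff]
      have hset : {a : ℝ | ¬a ≠ m} = {m} := by ext; simp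
      rw [hset]
      exact measure_singleton m
    filter_upwards [ae_restrict_mem measurableSet_Ioc, ae_restrict_of_ae h1] with r h2 h3
    exact ⟨h2, h3⟩
  have hptbd : ∀ r θ : ℝ, r ∈ Ioc (0:ℝ) 1 → r ≠ m →
      |F (r, θ)| ≤ 2 * |r - m| ^ (-(1/2:ℝ)) + 2 := by
    intro r θ hr hrm
    set y := ‖z - (r:ℂ) * Complex.exp ((θ:ℂ) * Complex.I)‖ with hy
    have hy0 : 0 ≤ y := norm_nonneg _
    have habs : 0 < |r - m| := abs_pos.mpr (sub_ne_zero.mpr hrm)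
    have h1 : |F (r, θ)| = r * |Real.log y| := by
      rw [hFdef, abs_mul, abs_of_pos hr.1]
    rw [h1]
    have h2 : |Real.log y| ≤ 2 * y ^ (-(1/2:ℝ)) + y := abs_log_le hy0
    have h3 : y ^ (-(1/2:ℝ)) ≤ |r - m| ^ (-(1/2:ℝ)) :=
      Real.rpow_le_rpow_of_nonpos habs (lower r θ hr.1.le) (by norm_num)
    have h4 : y ≤ 2 := upper r θ hr.1.le hr.2
    calc r * |Real.log y| ≤ 1 * |Real.log y| :=
          mul_le_mul_of_nonneg_right hr.2 (abs_nonneg _)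
      _ = |Real.log y| := one_mul _
      _ ≤ 2 * y ^ (-(1/2:ℝ)) + y := h2
      _ ≤ 2 * |r - m| ^ (-(1/2:ℝ)) + 2 := by
          apply add_le_add _ h4
          exact mul_le_mul_of_nonneg_left h3 (by norm_num)
  rw [IntegrableOn, Measure.volume_eq_prod, ← Measure.prod_restrict]
  rw [integrable_prod_iff hmeas.aestronglyMeasurable]
  constructor
  · filter_upwards [hae] with r hr
    obtain ⟨hr1, hrm⟩ := hr
    have hcont : Continuous fun θ : ℝ => F (r, θ) := by
      apply Continuous.mul continuous_const
      rw [continuous_iff_continuousAt]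
      intro θ
      apply ContinuousAt.log (by fun_prop)
      intro h
      have := lower r θ hr1.1.le
      rw [h] at this
      have : |r - m| = 0 := le_antisymm this (abs_nonneg _)
      exact (abs_pos.mpr (sub_ne_zero.mpr hrm)).ne' this
    exact (hcont.integrableOn_Icc).mono_set Ioo_subset_Icc_self
  · apply Integrable.mono'
      (g := fun r => (2 * |r - m| ^ (-(1/2:ℝ)) + 2) * (2*π))
    · apply Integrable.mul_const
      apply Integrable.add
      · exact ((integ_abs_rpow (norm_nonneg z) hz).const_mul 2)
      · rw [← IntegrableOn]
        apply (integrableOn_const_iff (C := (2:ℝ))).mpr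
        exact Or.inr measure_Ioc_lt_top
    · exact (hmeas.norm.aestronglyMeasurable).integral_prod_right'
    · filter_upwards [hae] with r hr
      obtain ⟨hr1, hrm⟩ := hr
      have hvol : volume (Ioo (-π) π) < ⊤ := measure_Ioo_lt_top
      have key := norm_setIntegral_le_of_norm_le_const (μ := volume)
        (s := Ioo (-π) π) (f := fun θ => ‖F (r, θ)‖)
        (C := 2 * |r - m| ^ (-(1/2:ℝ)) + 2) hvol
        (fun θ _ => by
          rw [norm_norm, Real.norm_eq_abs]
          exact hptbd r θ hr1 hrm)
      have hvol2 : volume.real (Ioo (-π) π) = 2*π := by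
        rw [Real.volume_real_Ioo_of_le (by linarith [Real.pi_pos])]
        ring
      rw [hvol2] at key
      exact key

lemma circle_Ioo {z : ℂ} {r : ℝ} (hr0 : 0 < r) (hrm : r ≠ ‖z‖) :
    (∫ θ in Ioo (-π) π, Real.log ‖z - (r:ℂ) * Complex.exp ((θ:ℂ) * Complex.I)‖)
      = 2*π*Real.log (max ‖z‖ r) := by
  set f := fun θ : ℝ => Real.log ‖z - (r:ℂ) * Complex.exp ((θ:ℂ) * Complex.I)‖ with hfdef
  have hper : Function.Periodic f (2*π) := by
    intro θ
    have h2 : Complex.exp (↑(θ + 2*π) * Complex.I) = Complex.exp ((θ:ℂ) * Complex.I) := by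
      push_cast
      rw [add_mul, Complex.exp_add]
      simp [Complex.exp_two_pi_mul_I]
    simp only [hfdef, h2]
  have h3 : (∫ θ in Ioo (-π) π, f θ) = ∫ θ in Set.Ioc (-π) π, f θ :=
    (MeasureTheory.integral_Ioc_eq_integral_Ioo).symm
  have h4 : (∫ θ in Set.Ioc (-π) π, f θ) = ∫ θ in (-π)..π, f θ :=
    (intervalIntegral.integral_of_le (by linarith [Real.pi_pos])).symm
  have h5 := hper.intervalIntegral_add_eq (-π) 0
  rw [zero_add] at h5
  have h6 : -π + 2*π = π := by ring
  rw [h6] at h5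
  rw [h3, h4, h5]
  exact circleLog hr0.le hrm

lemma inner_val {z : ℂ} (hz : ‖z‖ < 1) :
    (∫ w in Metric.closedBall (0:ℂ) 1, Real.log ‖z - w‖) = π * (‖z‖^2 - 1) / 2 := by
  rw [polar_ball (fun w => Real.log ‖z - w‖) (log_int hz.le)]
  set m := ‖z‖ with hm
  have hm0 : 0 ≤ m := norm_nonneg z
  have step1 : (∫ r in Ioc (0:ℝ) 1,
        ∫ θ in Ioo (-π) π, r * Real.log ‖z - (r:ℂ) * Complex.exp ((θ:ℂ) * Complex.I)‖)
      = ∫ r in Ioc (0:ℝ) 1, 2*π*(r * Real.log (max m r)) := by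
    apply setIntegral_congr_ae measurableSet_Ioc
    have h1 : ∀ᵐ r : ℝ, r ≠ m := by
      rw [ae_iff]
      have hset : {a : ℝ | ¬a ≠ m} = {m} := by ext; simp
      rw [hset]
      exact measure_singleton m
    filter_upwards [h1] with r hrm hr
    rw [MeasureTheory.integral_const_mul, circle_Ioo hr.1 hrm]
    ring
  rw [step1]
  have hsplit : Ioc (0:ℝ) 1 = Ioc 0 m ∪ Ioc m 1 := (Ioc_union_Ioc_eq_Ioc hm0 hz.le).symm
  have hint1 : IntegrableOn (fun r : ℝ => 2*π*(r * Real.log (max m r))) (Ioc 0 m) := by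
    apply IntegrableOn.congr_fun (f := fun r : ℝ => (2*π*Real.log m) * r)
    · exact (Continuous.integrableOn_Ioc (by continuity))
    · intro r hr
      show 2*π*Real.log m * r = 2*π*(r * Real.log (max m r))
      rw [max_eq_left hr.2]
      ring
    · exact measurableSet_Ioc
  have hint2 : IntegrableOn (fun r : ℝ => 2*π*(r * Real.log (max m r))) (Ioc m 1) := by
    apply IntegrableOn.congr_fun (f := fun r : ℝ => 2*π*(r * Real.log r))
    · exact Continuous.integrableOn_Ioc (continuous_const.mul Real.continuous_mul_log)
    · intro r hr
      show 2*π*(r * Real.log r) = 2*π*(r * Real.log (max m r))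
      rw [max_eq_right hr.1.le]
    · exact measurableSet_Ioc
  rw [hsplit, setIntegral_union (Set.Ioc_disjoint_Ioc_of_le le_rfl) measurableSet_Ioc hint1 hint2]
  have hA : (∫ r in Ioc (0:ℝ) m, 2*π*(r * Real.log (max m r))) = π * m^2 * Real.log m := by
    rw [setIntegral_congr_fun measurableSet_Ioc
      (g := fun r : ℝ => (2*π*Real.log m) * r)
      (fun r hr => by
        show 2*π*(r * Real.log (max m r)) = 2*π*Real.log m * r
        rw [max_eq_left hr.2]; ring)]
    rw [← intervalIntegral.integral_of_le hm0, intervalIntegral.integral_const_mul,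
      integral_id]
    ring
  have hB : (∫ r in Ioc m 1, 2*π*(r * Real.log (max m r)))
      = -π/2 - (π * m^2 * Real.log m - π * m^2/2) := by
    rw [setIntegral_congr_fun measurableSet_Ioc
      (g := fun r : ℝ => 2*π*(r * Real.log r))
      (fun r hr => by
        show 2*π*(r * Real.log (max m r)) = 2*π*(r * Real.log r)
        rw [max_eq_right hr.1.le])]
    rw [← intervalIntegral.integral_of_le hz.le]
    set F := fun r : ℝ => π * (r * (r * Real.log r)) - π * r^2/2 with hFdef
    have hcont : ContinuousOn F (Set.Icc m 1) := by
      apply Continuous.continuousOn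
      exact (continuous_const.mul (continuous_id.mul Real.continuous_mul_log)).sub
        (by continuity)
    have hderiv : ∀ x ∈ Set.Ioo m 1, HasDerivWithinAt F (2*π*(x * Real.log x)) (Set.Ioi x) x := by
      intro x hx
      have hx0 : (0:ℝ) < x := lt_of_le_of_lt hm0 hx.1
      have h1 : HasDerivAt (fun r : ℝ => r * Real.log r) (Real.log x + 1) x := by
        have := (hasDerivAt_id x).mul (Real.hasDerivAt_log hx0.ne')
        exact this.congr_deriv (by simp [hx0.ne'])
      have h2 : HasDerivAt (fun r : ℝ => r * (r * Real.log r))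
          (1 * (x * Real.log x) + x * (Real.log x + 1)) x := (hasDerivAt_id x).mul h1
      have h3 : HasDerivAt F (2*π*(x * Real.log x)) x := by
        have h4 := (h2.const_mul π).sub (((hasDerivAt_pow 2 x).const_mul π).div_const 2)
        exact h4.congr_deriv (by norm_num; ring)
      exact h3.hasDerivWithinAt
    have hintg : IntervalIntegrable (fun r : ℝ => 2*π*(r * Real.log r)) volume m 1 :=
      (continuous_const.mul Real.continuous_mul_log).intervalIntegrable _ _
    rw [intervalIntegral.integral_eq_sub_of_hasDeriv_right_of_le hz.le hcont hderiv hintg]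
    rw [hFdef]
    simp only
    rw [Real.log_one]
    ring
  rw [hA, hB]
  ring

lemma outer_val : (∫ z in Metric.closedBall (0:ℂ) 1, π * (‖z‖^2 - 1) / 2) = -(π^2/4) := by
  have hcont : Continuous (fun p : ℝ × ℝ =>
      p.1 * (π * (‖(p.1:ℂ) * Complex.exp ((p.2:ℂ) * Complex.I)‖^2 - 1) / 2)) := by
    fun_prop
  have hg : IntegrableOn (fun p : ℝ × ℝ =>
      p.1 * (π * (‖(p.1:ℂ) * Complex.exp ((p.2:ℂ) * Complex.I)‖^2 - 1) / 2))
      (Ioc (0:ℝ) 1 ×ˢ Ioo (-π) π) := by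
    apply IntegrableOn.mono_set
      (hcont.continuousOn.integrableOn_compact (isCompact_Icc.prod isCompact_Icc))
    exact Set.prod_mono Ioc_subset_Icc_self Ioo_subset_Icc_self
  rw [polar_ball (fun w => π * (‖w‖^2 - 1) / 2) hg]
  have step : (∫ r in Ioc (0:ℝ) 1,
        ∫ θ in Ioo (-π) π, r * (π * (‖(r:ℂ) * Complex.exp ((θ:ℂ) * Complex.I)‖^2 - 1) / 2))
      = ∫ r in Ioc (0:ℝ) 1, π^2 * (r^3 - r) := by
    apply setIntegral_congr_fun measurableSet_Ioc
    intro r hr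
    have hc : ∀ θ : ℝ, r * (π * (‖(r:ℂ) * Complex.exp ((θ:ℂ) * Complex.I)‖^2 - 1) / 2)
        = r * (π * (r^2 - 1) / 2) := by
      intro θ
      rw [norm_r_exp r θ hr.1.le]
    show (∫ θ in Ioo (-π) π, r * (π * (‖(r:ℂ) * Complex.exp ((θ:ℂ) * Complex.I)‖^2 - 1) / 2))
      = π^2 * (r^3 - r)
    rw [setIntegral_congr_fun measurableSet_Ioo (fun θ _ => hc θ), setIntegral_const]
    rw [Real.volume_real_Ioo_of_le (by linarith [Real.pi_pos] : -π ≤ π)]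
    rw [smul_eq_mul]
    ring
  rw [step, ← intervalIntegral.integral_of_le (by norm_num : (0:ℝ) ≤ 1),
    intervalIntegral.integral_const_mul]
  have h1 : (∫ x in (0:ℝ)..1, (x^3 - x)) = -(1/4 : ℝ) := by
    rw [intervalIntegral.integral_sub (intervalIntegral.intervalIntegrable_pow 3)
      (intervalIntegral.intervalIntegrable_id), integral_pow, integral_id]
    norm_num
  rw [h1]
  ring

lemma complex_double : (∫ z in Metric.closedBall (0:ℂ) 1,
    ∫ w in Metric.closedBall (0:ℂ) 1, Real.log ‖z - w‖) = -(π^2/4) := by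
  have hsph : volume (Metric.sphere (0:ℂ) 1) = 0 := Measure.addHaar_sphere _ _ _
  have hae : ∀ᵐ z : ℂ, z ∉ Metric.sphere (0:ℂ) 1 := by
    rw [ae_iff]
    have : {z : ℂ | ¬ z ∉ Metric.sphere (0:ℂ) 1} = Metric.sphere (0:ℂ) 1 := by
      ext; simp
    rw [this]
    exact hsph
  have hcongr : (∫ z in Metric.closedBall (0:ℂ) 1,
      ∫ w in Metric.closedBall (0:ℂ) 1, Real.log ‖z - w‖)
      = ∫ z in Metric.closedBall (0:ℂ) 1, π * (‖z‖^2 - 1) / 2 := by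
    apply setIntegral_congr_ae measurableSet_closedBall
    filter_upwards [hae] with z hz hmem
    have h1 : ‖z‖ ≤ 1 := by simpa [Metric.mem_closedBall, dist_zero_right] using hmem
    have h2 : ‖z‖ ≠ 1 := by
      intro h
      apply hz
      simp [Metric.mem_sphere, dist_zero_right, h]
    exact inner_val (lt_of_le_of_ne h1 h2)
  rw [hcongr, outer_val]

/-- The constant `c₀ = (1/(8π²)) ∬_{B₁(0)×B₁(0)} log|z−z′| dz dz′` equals `−1/32`;
equivalently, `∬_{B₁(0)×B₁(0)} log|z−z′| dz dz′ = −π²/4`, the double integral being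
over pairs of points of the closed unit disc in `ℝ²` with respect to Lebesgue
measure. -/
theorem stmt5 :
    (1 / (8 * π ^ 2)) *
        (∫ z in Metric.closedBall (0 : EuclideanSpace ℝ (Fin 2)) 1,
          ∫ z' in Metric.closedBall (0 : EuclideanSpace ℝ (Fin 2)) 1,
            Real.log ‖z - z'‖) = -(1 / 32) ∧
      (∫ z in Metric.closedBall (0 : EuclideanSpace ℝ (Fin 2)) 1,
        ∫ z' in Metric.closedBall (0 : EuclideanSpace ℝ (Fin 2)) 1,
          Real.log ‖z - z'‖) = -(π ^ 2 / 4) := by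
  set e : EuclideanSpace ℝ (Fin 2) ≃ₗᵢ[ℝ] ℂ := Complex.orthonormalBasisOneI.repr.symm with he
  have hmp : MeasurePreserving e := e.measurePreserving
  have hemb : MeasurableEmbedding e := e.toHomeomorph.measurableEmbedding
  have hpre : ⇑e ⁻¹' Metric.closedBall (0:ℂ) 1
      = Metric.closedBall (0 : EuclideanSpace ℝ (Fin 2)) 1 := by
    ext x
    simp only [Set.mem_preimage, Metric.mem_closedBall, dist_zero_right, e.norm_map]
  have hinner : ∀ x : EuclideanSpace ℝ (Fin 2),
      (∫ w in Metric.closedBall (0 : EuclideanSpace ℝ (Fin 2)) 1, Real.log ‖x - w‖)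
        = ∫ w in Metric.closedBall (0:ℂ) 1, Real.log ‖e x - w‖ := by
    intro x
    rw [← hmp.setIntegral_preimage_emb hemb (fun w => Real.log ‖e x - w‖) _, hpre]
    apply setIntegral_congr_fun measurableSet_closedBall
    intro w _
    show Real.log ‖x - w‖ = Real.log ‖e x - e w‖
    rw [← map_sub, e.norm_map]
  have hdouble : (∫ z in Metric.closedBall (0 : EuclideanSpace ℝ (Fin 2)) 1,
      ∫ z' in Metric.closedBall (0 : EuclideanSpace ℝ (Fin 2)) 1, Real.log ‖z - z'‖)
      = -(π ^ 2 / 4) := by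
    have h1 : (∫ z in Metric.closedBall (0 : EuclideanSpace ℝ (Fin 2)) 1,
        ∫ z' in Metric.closedBall (0 : EuclideanSpace ℝ (Fin 2)) 1, Real.log ‖z - z'‖)
        = ∫ z in Metric.closedBall (0:ℂ) 1,
            ∫ w in Metric.closedBall (0:ℂ) 1, Real.log ‖z - w‖ := by
      rw [← hmp.setIntegral_preimage_emb hemb
        (fun ζ => ∫ w in Metric.closedBall (0:ℂ) 1, Real.log ‖ζ - w‖) _, hpre]
      apply setIntegral_congr_fun measurableSet_closedBall
      intro x _
      exact hinner x
    rw [h1, complex_double]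
  refine ⟨?_, hdouble⟩
  rw [hdouble]
  have hπ : π ≠ 0 := Real.pi_ne_zero
  field_simp
  ring
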